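/- arXiv:1803.08079 — 10 statements merged into one kernel-verified Lean document; each statement's English description precedes it below -/
import Mathlib

section
/- The square [-1,1]² ⊂ ℝ² equals the projection onto (x,y) of the spectrahedron {(x,y,z) ∈ ℝ³ : the 3×3 symmetric matrix with diagonal entries 1,1,1 and off-diagonal entries x, y, z (i.e. rows (1,x,y),(x,1,z),(y,z,1)) is positive semidefinite}. -/
/-- The square `[-1,1]²` is the projection onto `(x,y)` of the elliptope
`{(x,y,z) : [[1,x,y],[x,1,z],[y,z,1]] ⪰ 0}`. -/
theorem square_eq_proj_elliptope :
    {p : ℝ × ℝ | -1 ≤ p.1 ∧ p.1 ≤ 1 ∧ -1 ≤ p.2 ∧ p.2 ≤ 1} =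
      (fun q : ℝ × ℝ × ℝ => (q.1, q.2.1)) ''
        {q : ℝ × ℝ × ℝ |
          (!![(1 : ℝ), q.1, q.2.1; q.1, 1, q.2.2; q.2.1, q.2.2, 1]).PosSemidef} := by
  ext ⟨x, y⟩
  simp only [Set.mem_setOf_eq, Set.mem_image, Prod.exists, Prod.mk.injEq]
  constructor
  · rintro ⟨hx1, hx2, hy1, hy2⟩
    refine ⟨x, y, x * y, Matrix.posSemidef_iff_dotProduct_mulVec.mpr ⟨?_, ?_⟩, rfl, rfl⟩
    · ext i j
      fin_cases i <;> fin_cases j <;> simp [Matrix.conjTranspose_apply]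
    · intro v
      simp [Matrix.mulVec, dotProduct, Fin.sum_univ_three]
      nlinarith [sq_nonneg (v 0 + x * v 1 + y * v 2), sq_nonneg (v 1), sq_nonneg (v 2),
        mul_nonneg (mul_nonneg (sub_nonneg.2 hx2) (by linarith : (0:ℝ) ≤ 1 + x)) (sq_nonneg (v 1)),
        mul_nonneg (mul_nonneg (sub_nonneg.2 hy2) (by linarith : (0:ℝ) ≤ 1 + y)) (sq_nonneg (v 2))]
  · rintro ⟨a, b, z, hP, rfl, rfl⟩
    obtain ⟨_, hq⟩ := Matrix.posSemidef_iff_dotProduct_mulVec.mp hP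
    have h1 := hq ![1, 1, 0]
    have h2 := hq ![1, -1, 0]
    have h3 := hq ![1, 0, 1]
    have h4 := hq ![1, 0, -1]
    simp [Matrix.mulVec, dotProduct, Fin.sum_univ_three] at h1 h2 h3 h4
    refine ⟨by linarith, by linarith, by linarith, by linarith⟩
end

section
/- Let X be the n×n matrix whose entries are variables x_1,...,x_{n²} written along its rows. The unit ball B = {x ∈ ℝ^{n²} : Σ x_i² ≤ 1} equals the projection onto x of the spectrahedron consisting of pairs (Y, X) such that the 2n×2n block matrix [[Y, X],[Xᵀ, I_n]] is positive semidefinite and trace(Y) = 1. -/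
open Matrix

lemma trace_mul_transpose_self (n : ℕ) (X : Matrix (Fin n) (Fin n) ℝ) :
    (X * Xᵀ).trace = ∑ i, ∑ j, (X i j) ^ 2 := by
  simp [Matrix.trace, Matrix.mul_apply, Matrix.diag, sq]

lemma psd_diag_nonneg {n : ℕ} {M : Matrix (Fin n) (Fin n) ℝ} (hM : M.PosSemidef)
    (i : Fin n) : 0 ≤ M i i := by
  have := hM.dotProduct_mulVec_nonneg (Pi.single i 1)
  simpa [dotProduct, Matrix.mulVec, Pi.single_apply] using this

/-- The unit ball in `ℝ^{n²}` (coordinates arranged as an `n × n` matrix `X`) equals the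
projection of the spectrahedron `{(Y,X) : [[Y,X],[Xᵀ,I]] ⪰ 0, trace Y = 1}`. -/
theorem ball_eq_proj_spectrahedron (n : ℕ) (hn : 0 < n) :
    {X : Matrix (Fin n) (Fin n) ℝ | ∑ i, ∑ j, (X i j) ^ 2 ≤ 1} =
      (fun p : Matrix (Fin n) (Fin n) ℝ × Matrix (Fin n) (Fin n) ℝ => p.2) ''
        {p : Matrix (Fin n) (Fin n) ℝ × Matrix (Fin n) (Fin n) ℝ |
          (Matrix.fromBlocks p.1 p.2 p.2ᵀ 1).PosSemidef ∧ p.1.trace = 1} := by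
  have hschur : ∀ Y X : Matrix (Fin n) (Fin n) ℝ,
      (Matrix.fromBlocks Y X Xᵀ 1).PosSemidef ↔ (Y - X * Xᵀ).PosSemidef := by
    intro Y X
    have h1 : (1 : Matrix (Fin n) (Fin n) ℝ).PosDef := Matrix.PosDef.one
    have hXH : Xᴴ = Xᵀ := by
      ext i j; simp [Matrix.conjTranspose]
    haveI : Invertible (1 : Matrix (Fin n) (Fin n) ℝ) := invertibleOne
    have := Matrix.PosDef.fromBlocks₂₂ Y X h1
    rw [hXH] at this
    rw [this]
    simp
  ext X
  simp only [Set.mem_setOf_eq, Set.mem_image]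
  constructor
  · intro hX
    set s := ∑ i, ∑ j, (X i j) ^ 2 with hs
    set c : ℝ := (1 - s) / n with hc
    have hc0 : 0 ≤ c := by
      apply div_nonneg (by linarith) (by positivity)
    refine ⟨(X * Xᵀ + c • 1, X), ⟨?_, ?_⟩, rfl⟩
    · rw [hschur]
      have : X * Xᵀ + c • (1 : Matrix (Fin n) (Fin n) ℝ) - X * Xᵀ = c • 1 := by
        abel
      rw [this, Matrix.smul_one_eq_diagonal]
      exact Matrix.PosSemidef.diagonal (fun _ => hc0)
    · rw [Matrix.trace_add, trace_mul_transpose_self, Matrix.trace_smul, Matrix.trace_one]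
      simp only [Fintype.card_fin, smul_eq_mul, hc]
      field_simp
      linarith [hs]
  · rintro ⟨⟨Y, X'⟩, ⟨hpsd, htr⟩, rfl⟩
    rw [hschur] at hpsd
    have h1 : (Y - X' * X'ᵀ).trace = 1 - ∑ i, ∑ j, (X' i j) ^ 2 := by
      rw [Matrix.trace_sub, htr, trace_mul_transpose_self]
    have h2 : 0 ≤ (Y - X' * X'ᵀ).trace := by
      rw [Matrix.trace]
      exact Finset.sum_nonneg fun i _ => psd_diag_nonneg hpsd i
    linarith [h1 ▸ h2]
end

section
/- If a nonnegative matrix M ∈ ℝ₊^{p×q} admits a factorization M_{ij} = ⟨A_i, B_j⟩ with A_i, B_j ∈ S₊^k (the cone of k×k real symmetric psd matrices, with trace inner product), then rank(M) ≤ k(k+1)/2. Equivalently, if rank_psd(M) = k then rank(M) ≤ k(k+1)/2, i.e. rank_psd(M) ≥ (√(1+8·rank(M)) − 1)/2. -/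
open Matrix
open Finset

lemma sum_symm_pairs {k : ℕ} (f : Fin k → Fin k → ℝ) (hf : ∀ a b, f a b = f b a) :
    ∑ a, ∑ b, f a b =
      ∑ x ∈ univ.filter (fun x : Fin k × Fin k => x.1 ≤ x.2),
        (if x.1 = x.2 then f x.1 x.1 else 2 * f x.1 x.2) := by
  rw [← Finset.sum_product', Finset.univ_product_univ]
  rw [← Finset.sum_filter_add_sum_filter_not univ (fun x : Fin k × Fin k => x.1 ≤ x.2)
    (fun x => f x.1 x.2)]
  have h2 : ∑ x ∈ univ.filter (fun x : Fin k × Fin k => ¬ x.1 ≤ x.2), f x.1 x.2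
      = ∑ x ∈ univ.filter (fun x : Fin k × Fin k => x.1 < x.2), f x.1 x.2 := by
    apply Finset.sum_nbij' (fun x => (x.2, x.1)) (fun x => (x.2, x.1)) <;>
      simp +contextual [hf _ _]
  have disj : Disjoint (univ.filter (fun x : Fin k × Fin k => x.1 = x.2))
      (univ.filter (fun x : Fin k × Fin k => x.1 < x.2)) := by
    rw [Finset.disjoint_filter]; intro x _ h; simp [h]
  have h3 : univ.filter (fun x : Fin k × Fin k => x.1 ≤ x.2)
      = univ.filter (fun x : Fin k × Fin k => x.1 = x.2) ∪
        univ.filter (fun x : Fin k × Fin k => x.1 < x.2) := by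
    ext x; simp [le_iff_lt_or_eq, or_comm]
  rw [h2, h3, Finset.sum_union disj, Finset.sum_union disj]
  have e1 : ∑ x ∈ univ.filter (fun x : Fin k × Fin k => x.1 = x.2),
      (if x.1 = x.2 then f x.1 x.1 else 2 * f x.1 x.2)
      = ∑ x ∈ univ.filter (fun x : Fin k × Fin k => x.1 = x.2), f x.1 x.2 := by
    apply Finset.sum_congr rfl; intro x hx; simp at hx; simp [hx]
  have e2 : ∑ x ∈ univ.filter (fun x : Fin k × Fin k => x.1 < x.2),
      (if x.1 = x.2 then f x.1 x.1 else 2 * f x.1 x.2)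
      = ∑ x ∈ univ.filter (fun x : Fin k × Fin k => x.1 < x.2), 2 * f x.1 x.2 := by
    apply Finset.sum_congr rfl; intro x hx; simp at hx; rw [if_neg (ne_of_lt hx)]
  rw [e1, e2, ← Finset.mul_sum]
  ring

/-- If a nonnegative matrix admits a psd factorization of size `k`, then its rank is at
most `k(k+1)/2`. -/
theorem rank_le_of_psd_factorization (p q k : ℕ) (M : Matrix (Fin p) (Fin q) ℝ)
    (hM : ∀ i j, 0 ≤ M i j)
    (A : Fin p → Matrix (Fin k) (Fin k) ℝ) (B : Fin q → Matrix (Fin k) (Fin k) ℝ)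
    (hA : ∀ i, (A i).PosSemidef) (hB : ∀ j, (B j).PosSemidef)
    (hfact : ∀ i j, (A i * B j).trace = M i j) :
    M.rank ≤ k * (k + 1) / 2 := by
  have hAs : ∀ i a b, A i a b = A i b a := by
    intro i a b
    have := congrFun (congrFun (hA i).1 b) a
    simpa [Matrix.conjTranspose_apply] using this
  have hBs : ∀ j a b, B j a b = B j b a := by
    intro j a b
    have := congrFun (congrFun (hB j).1 b) a
    simpa [Matrix.conjTranspose_apply] using this
  let P : Matrix (Fin p) {x : Fin k × Fin k // x.1 ≤ x.2} ℝ :=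
    fun i x => if x.1.1 = x.1.2 then A i x.1.1 x.1.1 else 2 * A i x.1.1 x.1.2
  let Q : Matrix {x : Fin k × Fin k // x.1 ≤ x.2} (Fin q) ℝ :=
    fun x j => B j x.1.1 x.1.2
  have hMPQ : M = P * Q := by
    ext i j
    rw [← hfact i j, Matrix.mul_apply]
    have htr : (A i * B j).trace = ∑ a, ∑ b, A i a b * B j b a := by
      simp [Matrix.trace, Matrix.diag, Matrix.mul_apply]
    rw [htr, sum_symm_pairs (fun a b => A i a b * B j b a)
      (fun a b => by show A i a b * B j b a = A i b a * B j a b; rw [hAs i a b, hBs j b a])]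
    rw [Finset.sum_subtype (p := fun x : Fin k × Fin k => x.1 ≤ x.2)
      (univ.filter (fun x : Fin k × Fin k => x.1 ≤ x.2)) (by simp)
      (fun x : Fin k × Fin k =>
        if x.1 = x.2 then A i x.1 x.1 * B j x.1 x.1 else 2 * (A i x.1 x.2 * B j x.2 x.1))]
    apply Finset.sum_congr rfl
    intro x _
    simp only [P, Q]
    split_ifs with h
    · rw [h]
    · rw [hBs j x.1.2 x.1.1]; ring
  rw [hMPQ]
  calc (P * Q).rank ≤ P.rank := Matrix.rank_mul_le_left P Q
    _ ≤ Fintype.card {x : Fin k × Fin k // x.1 ≤ x.2} := Matrix.rank_le_card_width P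
    _ = k * (k + 1) / 2 := by
        rw [← Fintype.card_congr (Sym2.sortEquiv (α := Fin k)), Sym2.card, Fintype.card_fin,
          Nat.choose_two_right, Nat.add_sub_cancel, Nat.mul_comm]
end

section
/- Let M ∈ ℝ₊^{p×q} have psd rank k, and let M' be the (p+1)×(q+1) matrix [[M, 0],[w, α]] where w ∈ ℝ₊^q is a nonnegative row vector, α > 0, and 0 denotes a zero column. Then rank_psd(M') = k + 1. -/
open Matrix

/-- The psd rank of a nonnegative matrix: the smallest `k` admitting a factorization
`M i j = trace (A i * B j)` with `A i, B j` psd matrices of size `k`. -/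
noncomputable def psdRank {p q : ℕ} (M : Matrix (Fin p) (Fin q) ℝ) : ℕ :=
  sInf {k : ℕ |
    ∃ (A : Fin p → Matrix (Fin k) (Fin k) ℝ) (B : Fin q → Matrix (Fin k) (Fin k) ℝ),
      (∀ i, (A i).PosSemidef) ∧ (∀ j, (B j).PosSemidef) ∧
        ∀ i j, (A i * B j).trace = M i j}


section helpers

variable {n : ℕ}

open scoped MatrixOrder

/-- If `A, B` are psd real matrices and `trace (A * B) = 0`, then `A * B = 0`. -/
lemma psd_trace_mul_eq_zero {A B : Matrix (Fin n) (Fin n) ℝ}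
    (hA : A.PosSemidef) (hB : B.PosSemidef) (h : (A * B).trace = 0) : A * B = 0 := by
  classical
  set S := CFC.sqrt A with hSdef
  set T := CFC.sqrt B with hTdef
  have hSS : S * S = A := CFC.sqrt_mul_sqrt_self A hA.nonneg
  have hTT : T * T = B := CFC.sqrt_mul_sqrt_self B hB.nonneg
  have hSsymm : Sᵀ = S := by
    have := (CFC.sqrt_nonneg A).posSemidef.isHermitian
    rwa [Matrix.IsHermitian, conjTranspose_eq_transpose_of_trivial] at this
  have hTsymm : Tᵀ = T := by
    have := (CFC.sqrt_nonneg B).posSemidef.isHermitian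
    rwa [Matrix.IsHermitian, conjTranspose_eq_transpose_of_trivial] at this
  have key : ((S * T) * (S * T)ᵀ).trace = 0 := by
    have : (S * T) * (S * T)ᵀ = S * (T * T) * S := by
      rw [transpose_mul, hSsymm, hTsymm, Matrix.mul_assoc, Matrix.mul_assoc, Matrix.mul_assoc]
    rw [this, hTT, Matrix.mul_assoc]
    calc (S * (B * S)).trace = ((B * S) * S).trace := trace_mul_comm _ _
      _ = (B * (S * S)).trace := by rw [Matrix.mul_assoc]
      _ = (B * A).trace := by rw [hSS]
      _ = (A * B).trace := trace_mul_comm _ _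
      _ = 0 := h
  have hST : S * T = 0 := by
    have hsum : ∑ i, ∑ j, ((S * T) i j) ^ 2 = 0 := by
      rw [← key]
      simp only [Matrix.trace, Matrix.diag, Matrix.mul_apply, sq, transpose_apply]
    ext i j
    have h1 : ∀ i ∈ Finset.univ, (0:ℝ) ≤ ∑ j, ((S * T) i j) ^ 2 :=
      fun i _ => Finset.sum_nonneg fun j _ => sq_nonneg _
    have h2 := (Finset.sum_eq_zero_iff_of_nonneg h1).mp hsum i (Finset.mem_univ i)
    have h3 : ∀ j ∈ Finset.univ, (0:ℝ) ≤ ((S * T) i j) ^ 2 := fun j _ => sq_nonneg _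
    have h4 := (Finset.sum_eq_zero_iff_of_nonneg h3).mp h2 j (Finset.mem_univ j)
    simpa using sq_eq_zero_iff.mp h4
  have hfin : A * B = S * ((S * T) * T) := by
    rw [← hSS, ← hTT]
    simp only [Matrix.mul_assoc]
  rw [hfin, hST, Matrix.zero_mul, Matrix.mul_zero]

/-- Extend a `k × k` matrix to a `(k+1) × (k+1)` matrix with new diagonal entry `c`. -/
def extM {k : ℕ} (X : Matrix (Fin k) (Fin k) ℝ) (c : ℝ) : Matrix (Fin (k+1)) (Fin (k+1)) ℝ :=
  Matrix.of fun a b =>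
    Fin.lastCases (Fin.lastCases c (fun _ => (0:ℝ)) b)
      (fun a' => Fin.lastCases (0:ℝ) (fun b' => X a' b') b) a

variable {k : ℕ} (X : Matrix (Fin k) (Fin k) ℝ) (c : ℝ)

@[simp] lemma extM_cc (a b : Fin k) : extM X c a.castSucc b.castSucc = X a b := by
  simp [extM]

@[simp] lemma extM_ll : extM X c (Fin.last k) (Fin.last k) = c := by simp [extM]

@[simp] lemma extM_cl (a : Fin k) : extM X c a.castSucc (Fin.last k) = 0 := by simp [extM]

@[simp] lemma extM_lc (b : Fin k) : extM X c (Fin.last k) b.castSucc = 0 := by simp [extM]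

lemma extM_posSemidef {X : Matrix (Fin k) (Fin k) ℝ} {c : ℝ}
    (hX : X.PosSemidef) (hc : 0 ≤ c) : (extM X c).PosSemidef := by
  rw [posSemidef_iff_dotProduct_mulVec]
  constructor
  · ext a b
    rw [conjTranspose_apply, star_trivial]
    have hXs : ∀ a b, X b a = X a b := fun a b => by
      have := congrFun (congrFun hX.isHermitian.eq a) b
      rwa [conjTranspose_apply, star_trivial] at this
    induction b using Fin.lastCases with
    | last => induction a using Fin.lastCases <;> simp
    | cast b => induction a using Fin.lastCases <;> simp [hXs]
  · intro x
    have key : star x ⬝ᵥ (extM X c *ᵥ x) =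
        star (fun l => x (Fin.castSucc l)) ⬝ᵥ (X *ᵥ fun l => x (Fin.castSucc l))
          + c * (x (Fin.last k)) ^ 2 := by
      simp only [dotProduct, mulVec, star_trivial, Pi.star_apply, sq]
      rw [Fin.sum_univ_castSucc]
      simp only [Fin.sum_univ_castSucc (n := k), extM_cc, extM_ll, extM_cl, extM_lc, mul_zero, zero_mul, Finset.sum_const_zero]
      ring_nf
    rw [key]
    exact add_nonneg (hX.dotProduct_mulVec_nonneg _) (mul_nonneg hc (sq_nonneg _))

lemma trace_extM_mul (X Y : Matrix (Fin k) (Fin k) ℝ) (c d : ℝ) :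
    ((extM X c) * (extM Y d)).trace = (X * Y).trace + c * d := by
  simp only [Matrix.trace, Matrix.diag, Matrix.mul_apply]
  rw [Fin.sum_univ_castSucc]
  simp only [Fin.sum_univ_castSucc (n := k), extM_cc, extM_ll, extM_cl, extM_lc,
    mul_zero, zero_mul, add_zero, zero_add, Finset.sum_const_zero]

end helpers

/-- The factorization set. -/
def psdSet {p q : ℕ} (M : Matrix (Fin p) (Fin q) ℝ) : Set ℕ :=
  {k : ℕ |
    ∃ (A : Fin p → Matrix (Fin k) (Fin k) ℝ) (B : Fin q → Matrix (Fin k) (Fin k) ℝ),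
      (∀ i, (A i).PosSemidef) ∧ (∀ j, (B j).PosSemidef) ∧
        ∀ i j, (A i * B j).trace = M i j}

lemma psdSet_nonempty {p q : ℕ} (M : Matrix (Fin p) (Fin q) ℝ) (hM : ∀ i j, 0 ≤ M i j) :
    q ∈ psdSet M := by
  refine ⟨fun i => diagonal (M i), fun j => diagonal (Pi.single j 1), ?_, ?_, ?_⟩
  · exact fun i => PosSemidef.diagonal fun l => hM i l
  · refine fun j => PosSemidef.diagonal fun l => ?_
    by_cases h : l = j <;> simp [Pi.single_apply, h]
  · intro i j
    rw [diagonal_mul_diagonal, trace_diagonal]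
    simp [Pi.single_apply]


lemma psdRank_eq_sInf_psdSet {p q : ℕ} (M : Matrix (Fin p) (Fin q) ℝ) :
    psdRank M = sInf (psdSet M) := rfl

/-- Extending `M` by a zero column and a new row `(w, α)` with `α > 0` increases the
psd rank by exactly one. -/
theorem psdRank_extend (p q k : ℕ) (M : Matrix (Fin p) (Fin q) ℝ)
    (hM : ∀ i j, 0 ≤ M i j) (hk : psdRank M = k)
    (w : Fin q → ℝ) (hw : ∀ j, 0 ≤ w j) (α : ℝ) (hα : 0 < α)
    (M' : Matrix (Fin (p + 1)) (Fin (q + 1)) ℝ)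
    (h₁ : ∀ (i : Fin p) (j : Fin q), M' i.castSucc j.castSucc = M i j)
    (h₂ : ∀ i : Fin p, M' i.castSucc (Fin.last q) = 0)
    (h₃ : ∀ j : Fin q, M' (Fin.last p) j.castSucc = w j)
    (h₄ : M' (Fin.last p) (Fin.last q) = α) :
    psdRank M' = k + 1 := by
  classical
  have hne : (psdSet M).Nonempty := ⟨q, psdSet_nonempty M hM⟩
  have hkmem : k ∈ psdSet M := by
    rw [← hk, psdRank_eq_sInf_psdSet]; exact Nat.sInf_mem hne
  obtain ⟨A, B, hApsd, hBpsd, hAB⟩ := hkmem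
  -- Upper bound: k + 1 ∈ psdSet M'
  have hub : (k + 1) ∈ psdSet M' := by
    refine ⟨Fin.lastCases (extM 0 α) (fun i => extM (A i) 0),
            Fin.lastCases (extM 0 1) (fun j => extM (B j) (w j / α)), ?_, ?_, ?_⟩
    · intro i
      induction i using Fin.lastCases with
      | last => simpa using extM_posSemidef PosSemidef.zero hα.le
      | cast i => simpa using extM_posSemidef (hApsd i) le_rfl
    · intro j
      induction j using Fin.lastCases with
      | last => simpa using extM_posSemidef PosSemidef.zero zero_le_one
      | cast j => simpa using extM_posSemidef (hBpsd j) (div_nonneg (hw j) hα.le)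
    · intro i j
      induction i using Fin.lastCases with
      | last =>
        induction j using Fin.lastCases with
        | last => simp [trace_extM_mul, h₄]
        | cast j =>
          simp only [Fin.lastCases_last, Fin.lastCases_castSucc, trace_extM_mul, h₃,
            Matrix.zero_mul, trace_zero, zero_add]
          field_simp
      | cast i =>
        induction j using Fin.lastCases with
        | last =>
          simp [trace_extM_mul, h₂]
        | cast j =>
          simp [trace_extM_mul, h₁, hAB]
  -- Lower bound
  have hlb : ∀ r ∈ psdSet M', k + 1 ≤ r := by
    rintro r ⟨A', B', hA'psd, hB'psd, hfac⟩
    obtain ⟨s, rfl⟩ : ∃ s, r = s + 1 := by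
      cases r with
      | zero =>
        exfalso
        have := hfac (Fin.last p) (Fin.last q)
        rw [h₄] at this
        simp [Matrix.trace] at this
        exact hα.ne' this.symm
      | succ s => exact ⟨s, rfl⟩
    -- B' last is nonzero
    obtain ⟨m₀, j₀, hmj⟩ : ∃ m j, B' (Fin.last q) m j ≠ 0 := by
      by_contra hcon
      push_neg at hcon
      have hB0 : B' (Fin.last q) = 0 := by ext a b; exact hcon a b
      have := hfac (Fin.last p) (Fin.last q)
      rw [h₄, hB0, Matrix.mul_zero, trace_zero] at this
      exact hα.ne' this.symm
    set v : Fin (s + 1) → ℝ := fun a => B' (Fin.last q) a j₀ with hvdef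
    have hv : v m₀ ≠ 0 := hmj
    have hAv : ∀ i : Fin p, A' i.castSucc *ᵥ v = 0 := by
      intro i
      have htr : (A' i.castSucc * B' (Fin.last q)).trace = 0 := by rw [hfac, h₂]
      have h0 := psd_trace_mul_eq_zero (hA'psd _) (hB'psd _) htr
      ext a
      have := congrFun (congrFun h0 a) j₀
      simpa [mulVec, dotProduct, Matrix.mul_apply, hvdef] using this
    -- the change of basis matrix
    set e : Fin (s + 1) → ℝ := Pi.single m₀ 1 with hedef
    set U : Matrix (Fin (s + 1)) (Fin (s + 1)) ℝ := 1 + replicateCol Unit (v - e) * replicateRow Unit e with hUdef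
    have hdet : U.det = v m₀ := by
      rw [hUdef, det_one_add_replicateCol_mul_replicateRow, hedef, single_dotProduct]
      simp
    have hdetU : IsUnit U.det := by rw [hdet]; exact isUnit_iff_ne_zero.mpr hv
    have hUV : U * U⁻¹ = 1 := mul_nonsing_inv U hdetU
    have hVU : U⁻¹ * U = 1 := nonsing_inv_mul U hdetU
    have hUcol : ∀ a, U a m₀ = v a := by
      intro a
      rw [hUdef]
      simp [Matrix.mul_apply, Matrix.one_apply, replicateCol_apply, replicateRow_apply, hedef, Pi.single_apply]
    set V := U⁻¹ with hVdef
    set Ah : Fin p → Matrix (Fin (s + 1)) (Fin (s + 1)) ℝ :=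
      fun i => Uᵀ * A' i.castSucc * U with hAhdef
    set Bh : Fin q → Matrix (Fin (s + 1)) (Fin (s + 1)) ℝ :=
      fun j => V * B' j.castSucc * Vᵀ with hBhdef
    have hAhpsd : ∀ i, (Ah i).PosSemidef := by
      intro i
      have := (hA'psd i.castSucc).conjTranspose_mul_mul_same U
      rwa [conjTranspose_eq_transpose_of_trivial] at this
    have hBhpsd : ∀ j, (Bh j).PosSemidef := by
      intro j
      have := (hB'psd j.castSucc).mul_mul_conjTranspose_same V
      rwa [conjTranspose_eq_transpose_of_trivial] at this
    have hVUt : Vᵀ * Uᵀ = 1 := by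
      rw [← transpose_mul, hUV, transpose_one]
    have htraceh : ∀ i j, (Ah i * Bh j).trace = M i j := by
      intro i j
      have expand : Ah i * Bh j = Uᵀ * (A' i.castSucc * B' j.castSucc * Vᵀ) := by
        rw [hAhdef, hBhdef]
        calc Uᵀ * A' i.castSucc * U * (V * B' j.castSucc * Vᵀ)
            = Uᵀ * A' i.castSucc * (U * V) * B' j.castSucc * Vᵀ := by
              simp only [Matrix.mul_assoc]
          _ = Uᵀ * (A' i.castSucc * B' j.castSucc * Vᵀ) := by
              rw [hVdef, hUV]
              simp only [Matrix.mul_one, Matrix.mul_assoc]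
      rw [expand, trace_mul_comm, Matrix.mul_assoc, Matrix.mul_assoc, hVUt, Matrix.mul_one,
        hfac, h₁]
    have hcol0 : ∀ i a, Ah i a m₀ = 0 := by
      intro i a
      have hUe : U *ᵥ e = v := by
        ext a'
        rw [hedef, mulVec_single]
        simpa using hUcol a'
      have hmv : Ah i *ᵥ e = 0 := by
        rw [hAhdef]
        simp only []
        rw [← mulVec_mulVec, ← mulVec_mulVec, hUe, hAv, mulVec_zero]
      have := congrFun hmv a
      simpa [hedef, mulVec_single] using this
    have hrow0 : ∀ i b, Ah i m₀ b = 0 := by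
      intro i b
      have hsym : (Ah i)ᵀ = Ah i := by
        have := (hAhpsd i).isHermitian
        rwa [Matrix.IsHermitian, conjTranspose_eq_transpose_of_trivial] at this
      calc Ah i m₀ b = (Ah i)ᵀ b m₀ := rfl
        _ = Ah i b m₀ := by rw [hsym]
        _ = 0 := hcol0 i b
    -- compression
    have hsmem : s ∈ psdSet M := by
      refine ⟨fun i => (Ah i).submatrix m₀.succAbove m₀.succAbove,
              fun j => (Bh j).submatrix m₀.succAbove m₀.succAbove,
              fun i => (hAhpsd i).submatrix _, fun j => (hBhpsd j).submatrix _, ?_⟩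
      intro i j
      have key : ((Ah i).submatrix m₀.succAbove m₀.succAbove *
          (Bh j).submatrix m₀.succAbove m₀.succAbove).trace = (Ah i * Bh j).trace := by
        simp only [Matrix.trace, Matrix.diag, Matrix.mul_apply, submatrix_apply]
        rw [Fin.sum_univ_succAbove _ m₀]
        simp only [Fin.sum_univ_succAbove (fun b => _) m₀]
        simp [hrow0, hcol0]
      rw [key, htraceh]
    have hk_le : k ≤ s := by
      rw [← hk, psdRank_eq_sInf_psdSet]
      exact Nat.sInf_le hsmem
    omega
  rw [psdRank_eq_sInf_psdSet]
  exact le_antisymm (Nat.sInf_le hub) (le_csInf ⟨_, hub⟩ hlb)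
end

section
/- In the setting of the previous extension: if M' = [[M,0],[w,α]] with rank_psd(M) = k admits a S₊^{k+1}-factorization A_1,...,A_{p+1}, B_1,...,B_{q+1}, then the factor B_{q+1} associated to the last column has rank one. -/
set_option maxHeartbeats 1000000

open Matrix

private lemma psd_transpose_eq {n : ℕ} {X : Matrix (Fin n) (Fin n) ℝ} (hX : X.PosSemidef) :
    Xᵀ = X := by
  have := hX.isHermitian
  rwa [Matrix.IsHermitian, Matrix.conjTranspose_eq_transpose_of_trivial] at this

private lemma trace_transpose_mul_self_eq_zero' {m n : ℕ} (C : Matrix (Fin m) (Fin n) ℝ)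
    (h : (Cᵀ * C).trace = 0) : C = 0 := by
  have ht : (Cᵀ * C).trace = ∑ j, ∑ i, C i j * C i j := by
    simp [Matrix.trace, Matrix.mul_apply, Matrix.diag]
  rw [ht] at h
  ext i j
  have h1 := (Finset.sum_eq_zero_iff_of_nonneg
    (fun j _ => Finset.sum_nonneg fun i _ => mul_self_nonneg (C i j))).mp h j (Finset.mem_univ j)
  have h2 := (Finset.sum_eq_zero_iff_of_nonneg
    (fun i _ => mul_self_nonneg (C i j))).mp h1 i (Finset.mem_univ i)
  simpa [mul_self_eq_zero] using h2

private lemma psd_mul_eq_zero {n : ℕ} {X Y : Matrix (Fin n) (Fin n) ℝ}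
    (hX : X.PosSemidef) (hY : Y.PosSemidef) (h : (X * Y).trace = 0) : X * Y = 0 := by
  open scoped MatrixOrder in set a := CFC.sqrt X with ha'
  open scoped MatrixOrder in set b := CFC.sqrt Y with hb'
  open scoped MatrixOrder in have ha : a * a = X := CFC.sqrt_mul_sqrt_self X hX.nonneg
  open scoped MatrixOrder in have hb : b * b = Y := CFC.sqrt_mul_sqrt_self Y hY.nonneg
  open scoped MatrixOrder in have hat : aᵀ = a := psd_transpose_eq (CFC.sqrt_nonneg X).posSemidef
  open scoped MatrixOrder in have hbt : bᵀ = b := psd_transpose_eq (CFC.sqrt_nonneg Y).posSemidef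
  have hab : a * b = 0 := by
    apply trace_transpose_mul_self_eq_zero'
    have hsym : (a * b)ᵀ = b * a := by rw [Matrix.transpose_mul, hat, hbt]
    rw [hsym]
    have e1 : b * a * (a * b) = b * (a * a) * b := by noncomm_ring
    rw [e1, Matrix.trace_mul_cycle, ha, hb, Matrix.trace_mul_comm]
    exact h
  calc X * Y = a * a * (b * b) := by rw [ha, hb]
    _ = a * (a * b) * b := by noncomm_ring
    _ = 0 := by rw [hab]; simp

/-- In a size-`(k+1)` psd factorization of the extended matrix `M' = [[M,0],[w,α]]`
(where `psdRank M = k`), the factor associated to the last column has rank one. -/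
theorem last_factor_rank_one (p q k : ℕ) (M : Matrix (Fin p) (Fin q) ℝ)
    (hM : ∀ i j, 0 ≤ M i j) (hk : psdRank M = k)
    (w : Fin q → ℝ) (hw : ∀ j, 0 ≤ w j) (α : ℝ) (hα : 0 < α)
    (M' : Matrix (Fin (p + 1)) (Fin (q + 1)) ℝ)
    (h₁ : ∀ (i : Fin p) (j : Fin q), M' i.castSucc j.castSucc = M i j)
    (h₂ : ∀ i : Fin p, M' i.castSucc (Fin.last q) = 0)
    (h₃ : ∀ j : Fin q, M' (Fin.last p) j.castSucc = w j)
    (h₄ : M' (Fin.last p) (Fin.last q) = α)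
    (A : Fin (p + 1) → Matrix (Fin (k + 1)) (Fin (k + 1)) ℝ)
    (B : Fin (q + 1) → Matrix (Fin (k + 1)) (Fin (k + 1)) ℝ)
    (hA : ∀ i, (A i).PosSemidef) (hB : ∀ j, (B j).PosSemidef)
    (hfact : ∀ i j, (A i * B j).trace = M' i j) :
    (B (Fin.last q)).rank = 1 := by
  classical
  set Bl := B (Fin.last q) with hBldef
  have hBlpsd : Bl.PosSemidef := hB (Fin.last q)
  -- the matrix is nonzero, hence its rank is positive
  have hBlne : Bl ≠ 0 := by
    intro h
    have := hfact (Fin.last p) (Fin.last q)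
    rw [h₄, ← hBldef, h, mul_zero, Matrix.trace_zero] at this
    exact absurd this.symm (ne_of_gt hα)
  have hrank_pos : 1 ≤ Bl.rank := by
    by_contra hr
    push_neg at hr
    have hr0 : Bl.rank = 0 := by omega
    rw [Matrix.rank, Submodule.finrank_eq_zero] at hr0
    rw [LinearMap.range_eq_bot] at hr0
    apply hBlne
    ext i j
    have := congrFun (congrFun (congrArg DFunLike.coe hr0) (Pi.single j 1)) i
    simpa [Matrix.mulVecLin_apply, Matrix.mulVec_single] using this
  -- the rank is at most one
  have hrank_le : Bl.rank ≤ 1 := by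
    by_contra hr
    push_neg at hr
    -- set up the kernel of Bl
    set N : Submodule ℝ (Fin (k + 1) → ℝ) := LinearMap.ker Bl.mulVecLin with hN
    set d : ℕ := Module.finrank ℝ N with hd
    have hdim : Bl.rank + d = k + 1 := by
      have := LinearMap.finrank_range_add_finrank_ker Bl.mulVecLin
      rwa [Module.finrank_fin_fun] at this
    have hdlt : d < k := by omega
    -- each A i kills Bl
    have hABl : ∀ i : Fin p, A i.castSucc * Bl = 0 := fun i =>
      psd_mul_eq_zero (hA _) hBlpsd (by rw [hfact, h₂])
    have hBlA : ∀ i : Fin p, Bl * A i.castSucc = 0 := by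
      intro i
      have := congrArg Matrix.transpose (hABl i)
      rwa [Matrix.transpose_mul, psd_transpose_eq hBlpsd, psd_transpose_eq (hA _),
        Matrix.transpose_zero] at this
    -- linear maps between (Fin d → ℝ) and (Fin (k+1) → ℝ)
    obtain ⟨g, hg⟩ := LinearMap.exists_leftInverse_of_injective N.subtype N.ker_subtype
    let bN : Module.Basis (Fin d) ℝ N := Module.finBasis ℝ N
    let φ : (Fin d → ℝ) →ₗ[ℝ] (Fin (k + 1) → ℝ) := N.subtype ∘ₗ bN.equivFun.symm.toLinearMap
    let ψ : (Fin (k + 1) → ℝ) →ₗ[ℝ] (Fin d → ℝ) := bN.equivFun.toLinearMap ∘ₗ g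
    set V : Matrix (Fin (k + 1)) (Fin d) ℝ := LinearMap.toMatrix' φ with hV
    set W : Matrix (Fin d) (Fin (k + 1)) ℝ := LinearMap.toMatrix' ψ with hW
    have hVmul : ∀ x, V *ᵥ x = φ x := by
      intro x
      rw [hV, ← Matrix.toLin'_apply, Matrix.toLin'_toMatrix']
    have hWmul : ∀ x, W *ᵥ x = ψ x := by
      intro x
      rw [hW, ← Matrix.toLin'_apply, Matrix.toLin'_toMatrix']
    -- V * W acts as identity on N
    have hVW : ∀ y ∈ N, V *ᵥ (W *ᵥ y) = y := by
      intro y hy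
      rw [hWmul, hVmul]
      have hgy : g y = ⟨y, hy⟩ := by
        have := LinearMap.congr_fun hg ⟨y, hy⟩
        simpa using this
      show φ (ψ y) = y
      simp only [φ, ψ, LinearMap.comp_apply, LinearEquiv.coe_coe,
        LinearEquiv.symm_apply_apply, hgy, Submodule.coe_subtype]
    -- columns of A i lie in N
    have hcol : ∀ (i : Fin p) x, A i.castSucc *ᵥ x ∈ N := by
      intro i x
      rw [hN, LinearMap.mem_ker, Matrix.mulVecLin_apply, Matrix.mulVec_mulVec, hBlA i,
        Matrix.zero_mulVec]
    -- hence (V * W) * A i = A i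
    have hPA : ∀ i : Fin p, V * W * A i.castSucc = A i.castSucc := by
      intro i
      ext r s
      have hx := hVW (A i.castSucc *ᵥ Pi.single s 1) (hcol i _)
      rw [Matrix.mulVec_mulVec, Matrix.mulVec_mulVec] at hx
      have := congrFun hx r
      simpa [Matrix.mulVec_single] using this
    have hAPt : ∀ i : Fin p, A i.castSucc * (Wᵀ * Vᵀ) = A i.castSucc := by
      intro i
      have := congrArg Matrix.transpose (hPA i)
      rwa [Matrix.transpose_mul, Matrix.transpose_mul, psd_transpose_eq (hA _)] at this
    -- the small factorization of M
    have hmem : d ∈ {k : ℕ |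
        ∃ (A : Fin p → Matrix (Fin k) (Fin k) ℝ) (B : Fin q → Matrix (Fin k) (Fin k) ℝ),
          (∀ i, (A i).PosSemidef) ∧ (∀ j, (B j).PosSemidef) ∧
            ∀ i j, (A i * B j).trace = M i j} := by
      refine ⟨fun i => W * A i.castSucc * Wᵀ, fun j => Vᵀ * B j.castSucc * V, ?_, ?_, ?_⟩
      · intro i
        have := (hA i.castSucc).mul_mul_conjTranspose_same W
        rwa [Matrix.conjTranspose_eq_transpose_of_trivial] at this
      · intro j
        have := (hB j.castSucc).conjTranspose_mul_mul_same V
        rwa [Matrix.conjTranspose_eq_transpose_of_trivial] at this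
      · intro i j
        have e1 : W * A i.castSucc * Wᵀ * (Vᵀ * B j.castSucc * V) =
            W * (A i.castSucc * (Wᵀ * Vᵀ) * B j.castSucc * V) := by
          simp only [Matrix.mul_assoc]
        rw [e1, Matrix.trace_mul_comm, hAPt i]
        have e2 : A i.castSucc * B j.castSucc * V * W =
            A i.castSucc * B j.castSucc * (V * W) := by rw [Matrix.mul_assoc]
        rw [e2, Matrix.trace_mul_comm, ← Matrix.mul_assoc, hPA i, hfact, h₁]
    have hle : psdRank M ≤ d := Nat.sInf_le hmem
    rw [hk] at hle
    omega
  omega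
end

section
/- If M ∈ ℝ₊^{p×q} is a nonnegative matrix and there exists a matrix N with N_{ij}² = M_{ij} for all i,j and rank(N) = r, then rank_psd(M) ≤ r. -/
open Matrix

lemma psd_outer {k : ℕ} (u : Fin k → ℝ) :
    (Matrix.of (fun a b => u a * u b)).PosSemidef := by
  rw [Matrix.posSemidef_iff_dotProduct_mulVec]
  constructor
  · ext a b
    simp [Matrix.conjTranspose_apply, mul_comm]
  · intro x
    have : (star x) ⬝ᵥ ((Matrix.of (fun a b => u a * u b)) *ᵥ x)
        = (∑ a, u a * x a) ^ 2 := by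
      simp only [dotProduct, mulVec, Matrix.of_apply, star_trivial, sq,
        Finset.sum_mul_sum, Finset.mul_sum, dotProduct]
      apply Finset.sum_congr rfl
      intro a _
      rw [Finset.sum_mul]
      apply Finset.sum_congr rfl
      intro b _
      ring
    rw [this]
    positivity

/-- If `N` is a Hadamard square root of `M` of rank `r`, then `psdRank M ≤ r`. -/
theorem psdRank_le_hadamard_sqrt_rank (p q : ℕ) (M N : Matrix (Fin p) (Fin q) ℝ)
    (hM : ∀ i j, 0 ≤ M i j) (hN : ∀ i j, (N i j) ^ 2 = M i j) (r : ℕ)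
    (hr : N.rank = r) : psdRank M ≤ r := by
  apply Nat.sInf_le
  set W := LinearMap.range N.mulVecLin with hWdef
  have hW : Module.finrank ℝ W = r := hr
  let b : Module.Basis (Fin r) ℝ W := Module.finBasisOfFinrankEq ℝ W hW
  let c : Fin q → W := fun j => ⟨N *ᵥ Pi.single j 1, ⟨Pi.single j 1, rfl⟩⟩
  let C : Fin p → Fin r → ℝ := fun i k => ((b k : Fin p → ℝ)) i
  let D : Fin r → Fin q → ℝ := fun k j => b.repr (c j) k
  have hfac : ∀ i j, N i j = ∑ k, C i k * D k j := by
    intro i j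
    have h1 : ((c j : W) : Fin p → ℝ) = ∑ k, D k j • ((b k : W) : Fin p → ℝ) := by
      conv_lhs => rw [← b.sum_repr (c j)]
      push_cast
      rfl
    have h2 : ((c j : W) : Fin p → ℝ) i = N i j := by
      simp [c, mulVec_single]
    rw [← h2, h1]
    simp [Finset.sum_apply, C, D, mul_comm]
  refine ⟨fun i => Matrix.of (fun k l => C i k * C i l),
          fun j => Matrix.of (fun k l => D k j * D l j),
          fun i => psd_outer _, fun j => psd_outer _, ?_⟩
  intro i j
  have : (Matrix.of (fun k l => C i k * C i l) * Matrix.of (fun k l => D k j * D l j)).trace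
      = (∑ k, C i k * D k j) ^ 2 := by
    simp only [Matrix.trace, Matrix.diag, Matrix.mul_apply, Matrix.of_apply, sq,
      Finset.sum_mul_sum]
    rw [Finset.sum_comm]
    apply Finset.sum_congr rfl
    intro a _
    apply Finset.sum_congr rfl
    intro k _
    ring
  rw [this, ← hfac, hN]
end

section
/- For a nonnegative matrix M ∈ ℝ₊^{p×q}, the smallest k such that M admits a S₊^k-factorization in which every factor has rank one equals the minimum rank over all Hadamard square roots of M: min{rank(N) : N_{ij}² = M_{ij} for all i,j}. -/
open Matrix

lemma exists_rank_factor {p q : ℕ} (N : Matrix (Fin p) (Fin q) ℝ) :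
    ∃ (a : Fin p → Fin N.rank → ℝ) (b : Fin q → Fin N.rank → ℝ),
      ∀ i j, (∑ l, a i l * b j l) = N i j := by
  have hrank : N.rank = Module.finrank ℝ (LinearMap.range N.mulVecLin) := rfl
  let c : Module.Basis (Fin (Module.finrank ℝ (LinearMap.range N.mulVecLin))) ℝ
      (LinearMap.range N.mulVecLin) := Module.finBasis ℝ _
  have hcol : ∀ j : Fin q, N *ᵥ Pi.single j 1 ∈ LinearMap.range N.mulVecLin := by
    intro j
    exact ⟨Pi.single j 1, rfl⟩
  refine ⟨fun i l => ((c (Fin.cast hrank l) : Fin p → ℝ)) i,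
    fun j l => c.repr ⟨N *ᵥ Pi.single j 1, hcol j⟩ (Fin.cast hrank l), fun i j => ?_⟩
  have hx := c.sum_repr ⟨N *ᵥ Pi.single j 1, hcol j⟩
  have hx' := congrArg (fun v : LinearMap.range N.mulVecLin => (v : Fin p → ℝ) i) hx
  simp only [AddSubmonoidClass.coe_finset_sum, Finset.sum_apply, SetLike.val_smul,
    Pi.smul_apply, smul_eq_mul] at hx'
  have hsingle : (N *ᵥ Pi.single j 1) i = N i j := by
    simp [Matrix.mulVec_single]
  rw [← hsingle, ← hx']
  exact Fintype.sum_equiv (finCongr hrank) _ _ (fun l => mul_comm _ _)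

/-- The smallest size of a psd factorization of `M` using only rank-one factors (i.e.
`M i j = ⟨a i, b j⟩²`) equals the minimum rank of a Hadamard square root of `M`. -/
theorem rank_one_factorization_eq_sqrt_rank (p q : ℕ) (M : Matrix (Fin p) (Fin q) ℝ)
    (hM : ∀ i j, 0 ≤ M i j) :
    sInf {k : ℕ | ∃ (a : Fin p → Fin k → ℝ) (b : Fin q → Fin k → ℝ),
        ∀ i j, (∑ l, a i l * b j l) ^ 2 = M i j} =
      sInf {r : ℕ | ∃ N : Matrix (Fin p) (Fin q) ℝ,
        (∀ i j, (N i j) ^ 2 = M i j) ∧ N.rank = r} := by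
  apply le_antisymm
  · -- from a square root N of rank r, build a factorization of size r
    have h2ne : {r : ℕ | ∃ N : Matrix (Fin p) (Fin q) ℝ,
        (∀ i j, (N i j) ^ 2 = M i j) ∧ N.rank = r}.Nonempty := by
      refine ⟨_, Matrix.of (fun i j => Real.sqrt (M i j)), fun i j => ?_, rfl⟩
      exact Real.sq_sqrt (hM i j)
    obtain ⟨N, hN, hr⟩ := Nat.sInf_mem h2ne
    obtain ⟨a, b, hab⟩ := exists_rank_factor N
    apply Nat.sInf_le
    rw [← hr]
    exact ⟨a, b, fun i j => by rw [hab]; exact hN i j⟩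
  · -- from a factorization of size k, build a square root of rank ≤ k
    have h1ne : {k : ℕ | ∃ (a : Fin p → Fin k → ℝ) (b : Fin q → Fin k → ℝ),
        ∀ i j, (∑ l, a i l * b j l) ^ 2 = M i j}.Nonempty := by
      refine ⟨q, fun i l => Real.sqrt (M i l), fun j l => if l = j then 1 else 0, fun i j => ?_⟩
      simp only [mul_ite, mul_one, mul_zero, Finset.sum_ite_eq', Finset.mem_univ, if_true]
      exact Real.sq_sqrt (hM i j)
    set k := sInf {k : ℕ | ∃ (a : Fin p → Fin k → ℝ) (b : Fin q → Fin k → ℝ),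
        ∀ i j, (∑ l, a i l * b j l) ^ 2 = M i j} with hk
    have hkmem : k ∈ {k : ℕ | ∃ (a : Fin p → Fin k → ℝ) (b : Fin q → Fin k → ℝ),
        ∀ i j, (∑ l, a i l * b j l) ^ 2 = M i j} := Nat.sInf_mem h1ne
    obtain ⟨a, b, hab⟩ := hkmem
    let A : Matrix (Fin p) (Fin k) ℝ := Matrix.of a
    let B : Matrix (Fin k) (Fin q) ℝ := Matrix.of (fun l j => b j l)
    have hAB : ∀ i j, (A * B) i j = ∑ l, a i l * b j l := fun i j => rfl
    have hmem : (A * B).rank ∈ {r : ℕ | ∃ N : Matrix (Fin p) (Fin q) ℝ,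
        (∀ i j, (N i j) ^ 2 = M i j) ∧ N.rank = r} :=
      ⟨A * B, fun i j => by rw [hAB]; exact hab i j, rfl⟩
    calc sInf {r : ℕ | ∃ N : Matrix (Fin p) (Fin q) ℝ,
            (∀ i j, (N i j) ^ 2 = M i j) ∧ N.rank = r} ≤ (A * B).rank := Nat.sInf_le hmem
      _ ≤ A.rank := Matrix.rank_mul_le_left A B
      _ ≤ k := Matrix.rank_le_width A
end

section
/- There is no vector u ∈ ℝ^t with all coordinates nonzero such that a fixed trinomial of the form u^a + u^b + u^c or u^a − u^b + u^c (a,b,c ∈ ℕ^t distinct monomial exponents) vanishes at both u and at the coordinatewise square (u₁²,...,u_t²). More precisely: if D(x) = x^a − x^b + x^c with a,b,c distinct, then there is no u ∈ (ℝ\{0})^t with D(u) = 0 and D(u₁²,...,u_t²) = 0. -/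
/-- Trinomial obstruction: a trinomial `x^a − x^b + x^c` with distinct exponent vectors
cannot vanish both at a point `u` with all coordinates nonzero and at the coordinatewise
square of `u`. -/
theorem trinomial_obstruction (t : ℕ) (a b c : Fin t → ℕ)
    (hab : a ≠ b) (hbc : b ≠ c) (hac : a ≠ c)
    (u : Fin t → ℝ) (hu : ∀ i, u i ≠ 0) :
    ¬ ((∏ i, u i ^ a i) - (∏ i, u i ^ b i) + (∏ i, u i ^ c i) = 0 ∧
        (∏ i, (u i ^ 2) ^ a i) - (∏ i, (u i ^ 2) ^ b i) + (∏ i, (u i ^ 2) ^ c i) = 0) := by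
  rintro ⟨h1, h2⟩
  have sq : ∀ e : Fin t → ℕ, (∏ i, (u i ^ 2) ^ e i) = (∏ i, u i ^ e i) ^ 2 := by
    intro e
    rw [← Finset.prod_pow]
    exact Finset.prod_congr rfl fun i _ => by ring
  rw [sq a, sq b, sq c] at h2
  set A := ∏ i, u i ^ a i with hA
  set B := ∏ i, u i ^ b i with hB
  set C := ∏ i, u i ^ c i with hC
  have hAne : A ≠ 0 := Finset.prod_ne_zero_iff.2 fun i _ => pow_ne_zero _ (hu i)
  have hCne : C ≠ 0 := Finset.prod_ne_zero_iff.2 fun i _ => pow_ne_zero _ (hu i)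
  have hB' : B = A + C := by linarith
  rw [hB'] at h2
  have hAC : A * C = 0 := by nlinarith [h2]
  exact mul_ne_zero hAne hCne hAC
end

section
/- Let S_P be the 4×4 matrix [[0,0,1,1],[0,1,1,0],[1,1,0,0],[1,0,0,1]]. Then there exist 3×3 real symmetric psd matrices A₁,...,A₄ and B₁,...,B₄ of rank one such that trace(A_iB_j) = (S_P)_{ij} for all i,j; explicitly A_i = v_iv_iᵀ with v₁=(1,1,1), v₂=(1,1,−1), v₃=(1,−1,−1), v₄=(1,−1,1), and B_j = ¼ w_jw_jᵀ with w₁=(1,−1,0), w₂=(1,0,−1), w₃=(1,1,0), w₄=(1,0,1). -/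
open Matrix

/-- The vertex vectors of the rank-one psd factorization of the slack matrix of the
square. -/
def sqV : Fin 4 → Fin 3 → ℝ := ![![1, 1, 1], ![1, 1, -1], ![1, -1, -1], ![1, -1, 1]]

/-- The facet vectors of the rank-one psd factorization of the slack matrix of the
square. -/
def sqW : Fin 4 → Fin 3 → ℝ := ![![1, -1, 0], ![1, 0, -1], ![1, 1, 0], ![1, 0, 1]]

lemma outer_col (v : Fin 3 → ℝ) :
    vecMulVec v v = replicateCol (Fin 1) v * (replicateCol (Fin 1) v)ᴴ := by
  rw [conjTranspose_replicateCol, vecMulVec_eq (Fin 1)]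
  congr 1

lemma outer_psd_rank (v : Fin 3 → ℝ) (hv : v ≠ 0) :
    (vecMulVec v v).PosSemidef ∧ (vecMulVec v v).rank = 1 := by
  rw [outer_col]
  refine ⟨posSemidef_self_mul_conjTranspose _, ?_⟩
  rw [rank_self_mul_conjTranspose]
  refine le_antisymm ?_ ?_
  · simpa using (replicateCol (Fin 1) v).rank_le_card_width
  · rw [rank_eq_finrank_span_cols]
    have h : Set.range (replicateCol (Fin 1) v).col = {v} := by
      ext w
      constructor
      · rintro ⟨i, rfl⟩; rfl
      · rintro rfl; exact ⟨0, rfl⟩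
    rw [h]
    simp [Submodule.span_singleton_eq_range, finrank_span_singleton hv]

lemma quarter_outer (w : Fin 3 → ℝ) :
    (1 / 4 : ℝ) • vecMulVec w w = vecMulVec ((1/2 : ℝ) • w) ((1/2 : ℝ) • w) := by
  ext i j
  simp [vecMulVec]
  ring

/-- Explicit rank-one psd factorization of size 3 of the slack matrix of the square:
`A_i = v_i v_iᵀ`, `B_j = ¼ w_j w_jᵀ`. -/
theorem square_slack_psd_factorization :
    (∀ i, (vecMulVec (sqV i) (sqV i)).PosSemidef ∧
        (vecMulVec (sqV i) (sqV i)).rank = 1) ∧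
    (∀ j, ((1 / 4 : ℝ) • vecMulVec (sqW j) (sqW j)).PosSemidef ∧
        ((1 / 4 : ℝ) • vecMulVec (sqW j) (sqW j)).rank = 1) ∧
    ∀ i j, (vecMulVec (sqV i) (sqV i) * ((1 / 4 : ℝ) • vecMulVec (sqW j) (sqW j))).trace =
      (!![(0:ℝ), 0, 1, 1; 0, 1, 1, 0; 1, 1, 0, 0; 1, 0, 0, 1]) i j := by
  refine ⟨fun i => ?_, fun j => ?_, fun i j => ?_⟩
  · refine outer_psd_rank _ fun h => ?_
    have := congrFun h 0
    fin_cases i <;> norm_num [sqV] at this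
  · rw [quarter_outer]
    refine outer_psd_rank _ fun h => ?_
    have := congrFun h 0
    fin_cases j <;> norm_num [sqW] at this
  · fin_cases i <;> fin_cases j <;>
      norm_num [Matrix.trace, Matrix.mul_apply, vecMulVec, sqV, sqW,
        Fin.sum_univ_succ, Matrix.diag, Matrix.vecHead, Matrix.vecTail]
end

section
/- Let C ⊂ ℝ^n be a compact convex set containing the origin in its interior. If there exist maps A from the extreme points of C to S₊^k and B from the extreme points of the polar C° to S₊^k such that trace(A(x)B(y)) = 1 − ⟨x,y⟩ for all extreme points x of C and y of C°, then k(k+3)/2 ≥ n, i.e. k = Ω(√n). -/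
open Matrix RealInnerProductSpace

section PsdAux

variable {n k : ℕ}

/-- If every extreme point `d` of a compact convex body `D` (with `x₀` interior)
satisfies `⟪w, d⟫ = t`, then `w = 0` and `t = 0`. -/
private lemma aux_const (D : Set (EuclideanSpace ℝ (Fin n))) (hDconv : Convex ℝ D)
    (hDcomp : IsCompact D) {x₀ : EuclideanSpace ℝ (Fin n)} (hx₀ : x₀ ∈ interior D)
    (w : EuclideanSpace ℝ (Fin n)) (t : ℝ)
    (h : ∀ d ∈ Set.extremePoints ℝ D, ⟪w, d⟫ = t) : w = 0 ∧ t = 0 := by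
  have hH : D ⊆ {v : EuclideanSpace ℝ (Fin n) | ⟪w, v⟫ = t} := by
    rw [← closure_convexHull_extremePoints hDcomp hDconv]
    refine closure_minimal (convexHull_min (fun d hd => h d hd) ?_) ?_
    · intro a ha b hb p q hp hq hpq
      simp only [Set.mem_setOf_eq] at ha hb ⊢
      rw [inner_add_right, real_inner_smul_right, real_inner_smul_right, ha, hb]
      linear_combination t * hpq
    · exact isClosed_eq (continuous_const.inner continuous_id) continuous_const
  obtain ⟨ε, hε, hball⟩ := Metric.mem_nhds_iff.1 (mem_interior_iff_mem_nhds.1 hx₀)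
  have hx₀D : x₀ ∈ D := hball (Metric.mem_ball_self hε)
  have hwnn : (0:ℝ) ≤ ‖w‖ := norm_nonneg w
  set c : ℝ := ε / (2 * (‖w‖ + 1)) with hc
  have hcpos : 0 < c := by positivity
  have hp : x₀ + c • w ∈ D := by
    apply hball
    rw [Metric.mem_ball, dist_eq_norm, add_sub_cancel_left, norm_smul,
      Real.norm_eq_abs, abs_of_pos hcpos]
    have : c * ‖w‖ < c * (‖w‖ + 1) := by nlinarith
    have h2 : c * (‖w‖ + 1) = ε / 2 := by rw [hc]; field_simp
    nlinarith
  have h1 : ⟪w, x₀ + c • w⟫ = t := hH hp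
  have h2 : ⟪w, x₀⟫ = t := hH hx₀D
  rw [inner_add_right, real_inner_smul_right, h2, real_inner_self_eq_norm_sq] at h1
  have hw0 : w = 0 := by
    have : ‖w‖ ^ 2 = 0 := by nlinarith
    simpa [pow_eq_zero_iff] using this
  refine ⟨hw0, ?_⟩
  rw [hw0, inner_zero_left] at h2
  exact h2.symm

/-- The submodule of symmetric `k × k` real matrices. -/
private def symSub (k : ℕ) : Submodule ℝ (Matrix (Fin k) (Fin k) ℝ) where
  carrier := {M | Mᵀ = M}
  add_mem' := by
    intro a b ha hb
    simp only [Set.mem_setOf_eq] at *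
    rw [Matrix.transpose_add, ha, hb]
  zero_mem' := by simp
  smul_mem' := by
    intro c a ha
    simp only [Set.mem_setOf_eq] at *
    rw [Matrix.transpose_smul, ha]

/-- Linear embedding of symmetric matrices into functions on `Sym2 (Fin k)`. -/
private noncomputable def symToFun (k : ℕ) : ↥(symSub k) →ₗ[ℝ] (Sym2 (Fin k) → ℝ) where
  toFun M s := Sym2.lift ⟨fun i j => (M : Matrix (Fin k) (Fin k) ℝ) i j,
    fun i j => (congrFun (congrFun M.2 j) i : _)⟩ s
  map_add' M N := by
    funext s
    induction s using Sym2.ind with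
    | _ i j => simp [Sym2.lift_mk]
  map_smul' c M := by
    funext s
    induction s using Sym2.ind with
    | _ i j => simp [Sym2.lift_mk]

private lemma symToFun_injective (k : ℕ) : Function.Injective (symToFun k) := by
  intro M N h
  apply Subtype.ext
  ext i j
  have := congrFun h s(i, j)
  simpa [symToFun, Sym2.lift_mk] using this

private lemma finrank_symSub_le (k : ℕ) :
    Module.finrank ℝ ↥(symSub k) ≤ (k + 1) * k / 2 := by
  have h := LinearMap.finrank_le_finrank_of_injective (symToFun_injective k)
  have h2 : Module.finrank ℝ (Sym2 (Fin k) → ℝ) = (k + 1) * k / 2 := by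
    rw [Module.finrank_fintype_fun_eq_card, Sym2.card, Fintype.card_fin,
      Nat.choose_two_right]
    simp
  omega

/-- The map `(t, v) ↦ (y ↦ t - ⟪v, y⟫)` on a set `Y`. -/
private noncomputable def phiMap (n : ℕ) (Y : Set (EuclideanSpace ℝ (Fin n))) :
    (ℝ × EuclideanSpace ℝ (Fin n)) →ₗ[ℝ] (Y → ℝ) where
  toFun p := fun y => p.1 - ⟪p.2, (y : EuclideanSpace ℝ (Fin n))⟫
  map_add' p q := by
    funext y
    simp only [Prod.fst_add, Prod.snd_add, inner_add_left, Pi.add_apply]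
    ring
  map_smul' c p := by
    funext y
    simp only [Prod.smul_fst, Prod.smul_snd, real_inner_smul_left, smul_eq_mul,
      RingHom.id_apply, Pi.smul_apply]
    ring

/-- The map `M ↦ (y ↦ trace (M * B y))` on a set `Y`. -/
private noncomputable def gMap {n k : ℕ} (B : EuclideanSpace ℝ (Fin n) → Matrix (Fin k) (Fin k) ℝ)
    (Y : Set (EuclideanSpace ℝ (Fin n))) :
    Matrix (Fin k) (Fin k) ℝ →ₗ[ℝ] (Y → ℝ) where
  toFun M := fun y => (M * B y).trace
  map_add' M N := by
    funext y
    simp [Matrix.add_mul]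
  map_smul' c M := by
    funext y
    simp [Matrix.smul_mul]

end PsdAux

/-- If the slack operator of an `n`-dimensional convex body `C` (compact, with `0` in its
interior) admits a psd factorization of size `k` through maps `A, B` on the extreme points
of `C` and of its polar `C°`, then `k(k+3)/2 ≥ n`; i.e. `rank_psd(C) = Ω(√n)`. -/
theorem psd_factorization_lower_bound (n k : ℕ)
    (C : Set (EuclideanSpace ℝ (Fin n)))
    (hconv : Convex ℝ C) (hcomp : IsCompact C) (h0 : (0 : EuclideanSpace ℝ (Fin n)) ∈ interior C)
    (A B : EuclideanSpace ℝ (Fin n) → Matrix (Fin k) (Fin k) ℝ)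
    (hA : ∀ x ∈ Set.extremePoints ℝ C, (A x).PosSemidef)
    (hB : ∀ y ∈ Set.extremePoints ℝ {y : EuclideanSpace ℝ (Fin n) | ∀ x ∈ C, ⟪x, y⟫ ≤ 1},
      (B y).PosSemidef)
    (hfact : ∀ x ∈ Set.extremePoints ℝ C,
      ∀ y ∈ Set.extremePoints ℝ {y : EuclideanSpace ℝ (Fin n) | ∀ x ∈ C, ⟪x, y⟫ ≤ 1},
        (A x * B y).trace = 1 - ⟪x, y⟫) :
    n ≤ k * (k + 3) / 2 := by
  classical
  set P : Set (EuclideanSpace ℝ (Fin n)) := {y : EuclideanSpace ℝ (Fin n) | ∀ x ∈ C, ⟪x, y⟫ ≤ 1} with hPdef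
  -- P is convex
  have hPconv : Convex ℝ P := by
    intro a ha b hb p q hp hq hpq x hx
    have h1 := ha x hx
    have h2 := hb x hx
    calc ⟪x, p • a + q • b⟫ = p * ⟪x, a⟫ + q * ⟪x, b⟫ := by
          rw [inner_add_right, real_inner_smul_right, real_inner_smul_right]
      _ ≤ 1 := by nlinarith
  -- P is closed
  have hPclosed : IsClosed P := by
    have : P = ⋂ x ∈ C, {y : EuclideanSpace ℝ (Fin n) | ⟪x, y⟫ ≤ 1} := by
      ext y; simp [hPdef]
    rw [this]
    exact isClosed_biInter fun x _ =>
      isClosed_le (continuous_const.inner continuous_id) continuous_const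
  -- ball inside C
  obtain ⟨ε, hε, hball⟩ := Metric.mem_nhds_iff.1 (mem_interior_iff_mem_nhds.1 h0)
  -- P is bounded, hence compact
  have hPsub : P ⊆ Metric.closedBall 0 (2 / ε) := by
    intro y hy
    rw [Metric.mem_closedBall, dist_zero_right]
    rcases eq_or_ne y 0 with rfl | hy0
    · simp; positivity
    · have hny : (0:ℝ) < ‖y‖ := norm_pos_iff.2 hy0
      have hxC : ((ε / 2) * ‖y‖⁻¹) • y ∈ C := by
        apply hball
        rw [Metric.mem_ball, dist_zero_right, norm_smul, Real.norm_eq_abs]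
        rw [abs_of_pos (by positivity)]
        rw [mul_assoc, inv_mul_cancel₀ hny.ne']
        nlinarith
      have h1 := hy _ hxC
      rw [real_inner_smul_left, real_inner_self_eq_norm_sq] at h1
      have h2 : (ε / 2) * ‖y‖⁻¹ * ‖y‖ ^ 2 = (ε / 2) * ‖y‖ := by
        field_simp
      rw [h2] at h1
      rw [div_eq_mul_inv]
      have h3 := mul_le_mul_of_nonneg_left h1 (by positivity : (0:ℝ) ≤ 2 * ε⁻¹)
      have he : ε * ε⁻¹ = 1 := mul_inv_cancel₀ hε.ne'
      nlinarith [h3, he]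
  have hPcomp : IsCompact P :=
    (isCompact_closedBall (0 : EuclideanSpace ℝ (Fin n)) (2 / ε)).of_isClosed_subset hPclosed hPsub
  -- 0 is in the interior of P
  obtain ⟨R, hR⟩ := hcomp.isBounded.subset_closedBall 0
  have h0P : (0 : EuclideanSpace ℝ (Fin n)) ∈ interior P := by
    have hsub : Metric.ball (0 : EuclideanSpace ℝ (Fin n)) (1 / (|R| + 1)) ⊆ P := by
      intro y hy x hx
      have hxR : ‖x‖ ≤ |R| := by
        have := hR hx
        rw [Metric.mem_closedBall, dist_zero_right] at this
        exact this.trans (le_abs_self R)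
      have hyn : ‖y‖ < 1 / (|R| + 1) := by
        rw [Metric.mem_ball, dist_zero_right] at hy; exact hy
      have hRpos : (0:ℝ) < |R| + 1 := by positivity
      calc ⟪x, y⟫ ≤ ‖x‖ * ‖y‖ := real_inner_le_norm x y
        _ ≤ |R| * ‖y‖ := by nlinarith [norm_nonneg y]
        _ ≤ |R| * (1 / (|R| + 1)) := by nlinarith [abs_nonneg R]
        _ ≤ 1 := by rw [mul_one_div, div_le_one hRpos]; linarith
    exact mem_interior.2 ⟨_, hsub, Metric.isOpen_ball, Metric.mem_ball_self (by positivity)⟩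
  -- the extreme point sets
  set X : Set (EuclideanSpace ℝ (Fin n)) := Set.extremePoints ℝ C with hX
  set Y : Set (EuclideanSpace ℝ (Fin n)) := Set.extremePoints ℝ P with hY
  -- the span of (1, x) over x ∈ X is everything
  have hUtop : Submodule.span ℝ ((fun x : EuclideanSpace ℝ (Fin n) => ((1:ℝ), x)) '' X) = ⊤ := by
    by_contra hne
    obtain ⟨f, hf0, hfbot⟩ :=
      Submodule.exists_dual_map_eq_bot_of_lt_top (lt_top_iff_ne_top.2 hne) inferInstance
    set g : EuclideanSpace ℝ (Fin n) →ₗ[ℝ] ℝ := f.comp (LinearMap.inr ℝ ℝ (EuclideanSpace ℝ (Fin n))) with hg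
    set b : EuclideanSpace ℝ (Fin n) := (InnerProductSpace.toDual ℝ (EuclideanSpace ℝ (Fin n))).symm (LinearMap.toContinuousLinearMap g)
      with hb
    have hbv : ∀ v : EuclideanSpace ℝ (Fin n), ⟪b, v⟫ = g v := by
      intro v
      rw [hb, InnerProductSpace.toDual_symm_apply]
      simp
    have hdecomp : ∀ p : ℝ × EuclideanSpace ℝ (Fin n), f p = p.1 * f ((1:ℝ), (0 : EuclideanSpace ℝ (Fin n))) + g p.2 := by
      intro p
      have : p = p.1 • ((1:ℝ), (0 : EuclideanSpace ℝ (Fin n))) + ((0:ℝ), p.2) := by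
        ext <;> simp
      rw [this, map_add, _root_.map_smul]
      simp [hg]
    have hext : ∀ x ∈ X, ⟪b, x⟫ = -(f ((1:ℝ), (0 : EuclideanSpace ℝ (Fin n)))) := by
      intro x hx
      have hmem : ((1:ℝ), x) ∈ Submodule.span ℝ ((fun x : EuclideanSpace ℝ (Fin n) => ((1:ℝ), x)) '' X) :=
        Submodule.subset_span ⟨x, hx, rfl⟩
      have hz : f ((1:ℝ), x) = 0 := by
        have : f ((1:ℝ), x) ∈ Submodule.map f (Submodule.span ℝ
            ((fun x : EuclideanSpace ℝ (Fin n) => ((1:ℝ), x)) '' X)) := Submodule.mem_map_of_mem hmem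
        rw [hfbot] at this
        simpa using this
      rw [hdecomp ((1:ℝ), x)] at hz
      rw [hbv]
      simp only at hz
      linarith
    obtain ⟨hb0, ht0⟩ := aux_const C hconv hcomp h0 b (-(f ((1:ℝ), (0 : EuclideanSpace ℝ (Fin n))))) hext
    apply hf0
    apply LinearMap.ext
    intro p
    rw [hdecomp p]
    have : g p.2 = ⟪b, p.2⟫ := (hbv p.2).symm
    rw [this, hb0, inner_zero_left]
    simp only [LinearMap.zero_apply]
    have hz : f ((1:ℝ), (0 : EuclideanSpace ℝ (Fin n))) = 0 := by linarith
    rw [hz]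
    ring
  -- Φ is injective
  have hΦinj : Function.Injective (phiMap n Y) := by
    rw [injective_iff_map_eq_zero]
    rintro ⟨t, v⟩ hp
    have h := aux_const P hPconv hPcomp h0P v t (fun d hd => by
      have := congrFun hp ⟨d, hd⟩
      simp only [phiMap, LinearMap.coe_mk, AddHom.coe_mk, Pi.zero_apply] at this
      linarith)
    rw [Prod.mk_eq_zero]
    exact ⟨h.2, h.1⟩
  -- range Φ is contained in the image of the symmetric matrices under G
  have hrange : LinearMap.range (phiMap n Y) ≤ (symSub k).map (gMap B Y) := by
    rw [← Submodule.map_top, ← hUtop, Submodule.map_span, Submodule.span_le]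
    rintro _ ⟨_, ⟨x, hx, rfl⟩, rfl⟩
    refine ⟨A x, ?_, ?_⟩
    · show (A x)ᵀ = A x
      have := (hA x hx).isHermitian
      rw [← Matrix.conjTranspose_eq_transpose_of_trivial]
      exact this
    · funext y
      show (A x * B ↑y).trace = 1 - ⟪x, (y : EuclideanSpace ℝ (Fin n))⟫
      exact hfact x hx ↑y y.2
  -- counting dimensions
  have h1 : Module.finrank ℝ ↥(LinearMap.range (phiMap n Y)) = n + 1 := by
    rw [LinearMap.finrank_range_of_inj hΦinj, Module.finrank_prod,
      finrank_euclideanSpace_fin, Module.finrank_self]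
    omega
  have h2 : Module.finrank ℝ ↥(LinearMap.range (phiMap n Y)) ≤
      Module.finrank ℝ ↥((symSub k).map (gMap B Y)) :=
    Submodule.finrank_mono hrange
  have h3 : Module.finrank ℝ ↥((symSub k).map (gMap B Y)) ≤
      Module.finrank ℝ ↥(symSub k) :=
    Submodule.finrank_map_le (gMap B Y) (symSub k)
  have h4 := finrank_symSub_le k
  have h5 : (k + 1) * k / 2 ≤ k * (k + 3) / 2 :=
    Nat.div_le_div_right (by nlinarith)
  omega
end
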